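/- Let Γ(τ) be a holomorphic function on a domain in the upper half-plane and define Ω := Γ' − (1/2)Γ². Suppose x(τ) is holomorphic with ẋ ≠ 0, Γ = ẍ/ẋ (so that ∇x := ẋ satisfies ∇²x = ẍ − Γẋ = 0), and suppose x satisfies [x,τ] = Q(x) for a function Q, i.e. Ω = Q(x)·ẋ². Then, with ∇Ω := Ω̇ − 2ΓΩ and ∇²Ω := (d/dτ − 3Γ)(d/dτ − 2Γ)Ω, one has the identities (∇Ω)²/Ω³ = Q'(x)²/Q(x)³ and ∇²Ω/Ω² = Q''(x)/Q(x)², wherever Ω and Q(x) are nonzero. -/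

import Mathlib

/-- The meromorphic derivative [x,τ] = x⃛/ẋ³ − (3/2)ẍ²/ẋ⁴. -/
noncomputable def merD (x : ℂ → ℂ) (τ : ℂ) : ℂ :=
  iteratedDeriv 3 x τ / (deriv x τ) ^ 3
    - (3 / 2) * (iteratedDeriv 2 x τ) ^ 2 / (deriv x τ) ^ 4

private lemma analyticAt_deriv' {f : ℂ → ℂ} {z : ℂ} (h : AnalyticAt ℂ f z) :
    AnalyticAt ℂ (deriv f) z :=
  (AnalyticOnNhd.deriv (fun _ hy => hy : AnalyticOnNhd ℂ f {y | AnalyticAt ℂ f y})) z h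

/-- For the canonical connection Γ = ẍ/ẋ with Ω = Γ' − Γ²/2 = Q(x)ẋ², the covariant
derivatives ∇Ω = Ω̇ − 2ΓΩ and ∇²Ω = (d/dτ − 3Γ)(d/dτ − 2Γ)Ω satisfy the scalar
identities (∇Ω)²/Ω³ = Q'(x)²/Q(x)³ and ∇²Ω/Ω² = Q''(x)/Q(x)². -/
theorem connection_scalar_identities (U : Set ℂ) (hU : IsOpen U)
    (x Γ Ω Q : ℂ → ℂ)
    (hx : ∀ τ ∈ U, AnalyticAt ℂ x τ)
    (hΓa : ∀ τ ∈ U, AnalyticAt ℂ Γ τ)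
    (hQa : ∀ τ ∈ U, AnalyticAt ℂ Q (x τ))
    (hx' : ∀ τ ∈ U, deriv x τ ≠ 0)
    (hΓ : ∀ τ ∈ U, Γ τ = deriv (deriv x) τ / deriv x τ)
    (hΩdef : ∀ τ, Ω τ = deriv Γ τ - (1 / 2) * (Γ τ) ^ 2)
    (hmerD : ∀ τ ∈ U, merD x τ = Q (x τ))
    (hΩ : ∀ τ ∈ U, Ω τ = Q (x τ) * (deriv x τ) ^ 2) :
    ∀ τ ∈ U, Ω τ ≠ 0 → Q (x τ) ≠ 0 →
      ((deriv Ω τ - 2 * Γ τ * Ω τ) ^ 2 / (Ω τ) ^ 3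
          = (deriv Q (x τ)) ^ 2 / (Q (x τ)) ^ 3
        ∧ (deriv (fun t => deriv Ω t - 2 * Γ t * Ω t) τ
              - 3 * Γ τ * (deriv Ω τ - 2 * Γ τ * Ω τ)) / (Ω τ) ^ 2
          = deriv (deriv Q) (x τ) / (Q (x τ)) ^ 2) := by
  -- key: on U, ∇Ω = Q'(x) ẋ³
  have hdf : ∀ σ ∈ U, deriv (deriv x) σ = Γ σ * deriv x σ := by
    intro σ hσ
    rw [hΓ σ hσ, div_mul_cancel₀ _ (hx' σ hσ)]
  have key : ∀ σ ∈ U, deriv Ω σ - 2 * Γ σ * Ω σ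
      = deriv Q (x σ) * (deriv x σ) ^ 3 := by
    intro σ hσ
    have hUσ : U ∈ nhds σ := hU.mem_nhds hσ
    have hxσ := hx σ hσ
    have hQσ := hQa σ hσ
    have h1 : HasDerivAt (fun t => Q (x t)) (deriv Q (x σ) * deriv x σ) σ :=
      (hQσ.differentiableAt.hasDerivAt).comp σ hxσ.differentiableAt.hasDerivAt
    have h2 : HasDerivAt (deriv x) (deriv (deriv x) σ) σ :=
      (analyticAt_deriv' hxσ).differentiableAt.hasDerivAt
    have h3 : HasDerivAt (fun t => Q (x t) * (deriv x t) ^ 2)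
        ((deriv Q (x σ) * deriv x σ) * (deriv x σ) ^ 2
          + Q (x σ) * ((2 : ℕ) * (deriv x σ) ^ 1 * deriv (deriv x) σ)) σ :=
      h1.mul (h2.pow 2)
    have hEq : Ω =ᶠ[nhds σ] fun t => Q (x t) * (deriv x t) ^ 2 :=
      Filter.eventuallyEq_of_mem hUσ (fun t ht => hΩ t ht)
    have hderiv : deriv Ω σ = (deriv Q (x σ) * deriv x σ) * (deriv x σ) ^ 2
        + Q (x σ) * ((2 : ℕ) * (deriv x σ) ^ 1 * deriv (deriv x) σ) := by
      rw [hEq.deriv_eq, h3.deriv]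
    rw [hderiv, hΩ σ hσ, hdf σ hσ]
    push_cast
    ring
  intro τ hτ hΩ0 hQ0
  have hUτ : U ∈ nhds τ := hU.mem_nhds hτ
  have hxτ := hx τ hτ
  have hx'τ := hx' τ hτ
  have hΩτ := hΩ τ hτ
  constructor
  · rw [key τ hτ, hΩτ]
    field_simp
  · -- second covariant derivative
    have h1 : HasDerivAt (fun t => deriv Q (x t))
        (deriv (deriv Q) (x τ) * deriv x τ) τ :=
      ((analyticAt_deriv' (hQa τ hτ)).differentiableAt.hasDerivAt).comp τ
        hxτ.differentiableAt.hasDerivAt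
    have h2 : HasDerivAt (deriv x) (deriv (deriv x) τ) τ :=
      (analyticAt_deriv' hxτ).differentiableAt.hasDerivAt
    have h3 : HasDerivAt (fun t => deriv Q (x t) * (deriv x t) ^ 3)
        ((deriv (deriv Q) (x τ) * deriv x τ) * (deriv x τ) ^ 3
          + deriv Q (x τ) * ((3 : ℕ) * (deriv x τ) ^ 2 * deriv (deriv x) τ)) τ :=
      h1.mul (h2.pow 3)
    have hEq : (fun t => deriv Ω t - 2 * Γ t * Ω t)
        =ᶠ[nhds τ] fun t => deriv Q (x t) * (deriv x t) ^ 3 :=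
      Filter.eventuallyEq_of_mem hUτ (fun t ht => key t ht)
    have hderiv : deriv (fun t => deriv Ω t - 2 * Γ t * Ω t) τ
        = (deriv (deriv Q) (x τ) * deriv x τ) * (deriv x τ) ^ 3
          + deriv Q (x τ) * ((3 : ℕ) * (deriv x τ) ^ 2 * deriv (deriv x) τ) := by
      rw [hEq.deriv_eq, h3.deriv]
    rw [hderiv, key τ hτ, hΩτ, hdf τ hτ]
    push_cast
    field_simp
    ring
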